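/- arXiv:2512.05151 — 2 statements merged into one kernel-verified Lean document; each statement's English description precedes it below -/
import Mathlib

section
/- No-cloning theorem: there is no unitary U on ℂ² ⊗ ℂ² such that U(ψ ⊗ e₀) = ψ ⊗ ψ for all unit vectors ψ ∈ ℂ², where e₀ is a fixed unit vector. -/
open Matrix

/-- Tensor product of two qubit vectors, as a vector on `Fin 2 × Fin 2`. -/
def tensorVec (v w : Fin 2 → ℂ) : Fin 2 × Fin 2 → ℂ := fun p => v p.1 * w p.2

/-- No-cloning theorem. -/
theorem no_cloning (e₀ : Fin 2 → ℂ) (he₀ : ∑ i, ‖e₀ i‖ ^ 2 = 1) :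
    ¬ ∃ U : Matrix (Fin 2 × Fin 2) (Fin 2 × Fin 2) ℂ,
        Uᴴ * U = 1 ∧
        ∀ ψ : Fin 2 → ℂ, (∑ i, ‖ψ i‖ ^ 2 = 1) →
          U.mulVec (tensorVec ψ e₀) = tensorVec ψ ψ := by
  rintro ⟨U, hU, hclone⟩
  set c : ℝ := Real.sqrt 2 / 2 with hcdef
  have hc2 : c ^ 2 = 1 / 2 := by
    rw [hcdef, div_pow, Real.sq_sqrt (by norm_num : (0:ℝ) ≤ 2)]
    norm_num
  set ψ : Fin 2 → ℂ := ![1, 0] with hψdef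
  set φ : Fin 2 → ℂ := ![(c : ℂ), (c : ℂ)] with hφdef
  have hψ : ∑ i, ‖ψ i‖ ^ 2 = 1 := by
    simp [hψdef, Fin.sum_univ_two]
  have hφ : ∑ i, ‖φ i‖ ^ 2 = 1 := by
    simp only [hφdef, Fin.sum_univ_two, Matrix.cons_val_zero, Matrix.cons_val_one,
      Matrix.head_cons, Complex.norm_real]
    rw [Real.norm_eq_abs, sq_abs, hc2]; ring
  have key : star (U *ᵥ tensorVec ψ e₀) ⬝ᵥ (U *ᵥ tensorVec φ e₀)
      = star (tensorVec ψ e₀) ⬝ᵥ (tensorVec φ e₀) := by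
    rw [Matrix.star_mulVec, Matrix.dotProduct_mulVec, Matrix.vecMul_vecMul, hU,
      Matrix.vecMul_one]
  rw [hclone ψ hψ, hclone φ hφ] at key
  have hS : ∑ j, (starRingEnd ℂ) (e₀ j) * e₀ j = 1 := by
    have : ∀ j, (starRingEnd ℂ) (e₀ j) * e₀ j = ((‖e₀ j‖ ^ 2 : ℝ) : ℂ) := by
      intro j
      rw [mul_comm, Complex.mul_conj, Complex.normSq_eq_norm_sq]
    rw [Finset.sum_congr rfl fun j _ => this j, ← Complex.ofReal_sum, he₀,
      Complex.ofReal_one]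
  rw [Fin.sum_univ_two] at hS
  have hL : star (tensorVec ψ e₀) ⬝ᵥ (tensorVec φ e₀) = (c : ℂ) := by
    simp only [dotProduct, Fintype.sum_prod_type, tensorVec, Pi.star_apply,
      star_mul', Fin.sum_univ_two, hψdef, hφdef, Matrix.cons_val_zero,
      Matrix.cons_val_one, Matrix.head_cons, map_zero, _root_.map_one,
      RCLike.star_def]
    linear_combination (c:ℂ) * hS
  have hR : star (tensorVec ψ ψ) ⬝ᵥ (tensorVec φ φ) = ((c : ℂ)) ^ 2 := by
    simp only [dotProduct, Fintype.sum_prod_type, tensorVec, Pi.star_apply,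
      star_mul', Fin.sum_univ_two, hψdef, hφdef, Matrix.cons_val_zero,
      Matrix.cons_val_one, Matrix.head_cons, map_zero, _root_.map_one, RCLike.star_def]
    ring
  rw [hL, hR] at key
  have hcr : c ^ 2 = c := by exact_mod_cast key
  nlinarith [hc2, hcr]
end

section
/- For the DQC1 circuit, the expectation of σ_z on the clean qubit equals the normalized real trace of the unitary: if the n-qubit input is ρ = |0⟩⟨0| ⊗ (I/2^{n-1}) and we apply (H⊗I)·CU·(H⊗I) where CU = |0⟩⟨0|⊗I + |1⟩⟨1|⊗U for a unitary U on 2^{n-1} dimensions, then the expectation of σ_z ⊗ I in the output state equals Re(Tr U)/2^{n-1}. -/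
open Matrix Kronecker

/-- The Hadamard matrix. -/
noncomputable def hadamard2 : Matrix (Fin 2) (Fin 2) ℂ :=
  ((1 / Real.sqrt 2 : ℝ) : ℂ) • !![1, 1; 1, -1]

noncomputable def pauliZ : Matrix (Fin 2) (Fin 2) ℂ := !![1, 0; 0, -1]

lemma kronecker_conjTranspose' {m n : Type*} [Fintype m] [Fintype n]
    (A : Matrix m m ℂ) (B : Matrix n n ℂ) : (A ⊗ₖ B)ᴴ = Aᴴ ⊗ₖ Bᴴ := by
  ext ⟨i, x⟩ ⟨j, y⟩
  simp [conjTranspose_apply, kroneckerMap_apply]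

/-- DQC1: the expectation of `σ_z` on the clean qubit is the normalized real trace. -/
theorem dqc1_trace_estimation (n : ℕ) (hn : 0 < n)
    (U : Matrix (Fin (2 ^ (n - 1))) (Fin (2 ^ (n - 1))) ℂ)
    (hU : U ∈ Matrix.unitaryGroup (Fin (2 ^ (n - 1))) ℂ) :
    let d : ℕ := 2 ^ (n - 1)
    let I : Matrix (Fin d) (Fin d) ℂ := 1
    let CU : Matrix (Fin 2 × Fin d) (Fin 2 × Fin d) ℂ :=
      (!![1, 0; 0, 0] : Matrix (Fin 2) (Fin 2) ℂ) ⊗ₖ I +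
        (!![0, 0; 0, 1] : Matrix (Fin 2) (Fin 2) ℂ) ⊗ₖ U
    let V : Matrix (Fin 2 × Fin d) (Fin 2 × Fin d) ℂ :=
      (hadamard2 ⊗ₖ I) * CU * (hadamard2 ⊗ₖ I)
    let ρ : Matrix (Fin 2 × Fin d) (Fin 2 × Fin d) ℂ :=
      (!![1, 0; 0, 0] : Matrix (Fin 2) (Fin 2) ℂ) ⊗ₖ (((1 : ℂ) / (2 ^ (n - 1))) • I)
    ((pauliZ ⊗ₖ I) * (V * ρ * Vᴴ)).trace = ((U.trace.re : ℝ) : ℂ) / (2 ^ (n - 1)) := by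
  intro d I CU V ρ
  have hI : I = 1 := rfl
  set c : ℂ := ((1 / Real.sqrt 2 : ℝ) : ℂ) with hc
  have hcc : c * c = 1 / 2 := by
    have h2 : Real.sqrt 2 * Real.sqrt 2 = 2 := Real.mul_self_sqrt (by norm_num)
    rw [hc, ← Complex.ofReal_mul, div_mul_div_comm, one_mul, h2]
    norm_num
  set A : Matrix (Fin 2) (Fin 2) ℂ := (1/2 : ℂ) • !![1, 1; 1, 1] with hAdef
  set B : Matrix (Fin 2) (Fin 2) ℂ := (1/2 : ℂ) • !![1, -1; -1, 1] with hBdef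
  have hA : hadamard2 * !![1, 0; 0, 0] * hadamard2 = A := by
    rw [hadamard2, ← hc, smul_mul_assoc, smul_mul_assoc, mul_smul_comm, smul_smul, hcc]
    congr 1
    ext i j
    fin_cases i <;> fin_cases j <;>
      simp [Matrix.mul_apply, Fin.sum_univ_two]
  have hB : hadamard2 * !![0, 0; 0, 1] * hadamard2 = B := by
    rw [hadamard2, ← hc, smul_mul_assoc, smul_mul_assoc, mul_smul_comm, smul_smul, hcc]
    congr 1
    ext i j
    fin_cases i <;> fin_cases j <;>
      simp [Matrix.mul_apply, Fin.sum_univ_two]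
  have hV : V = A ⊗ₖ I + B ⊗ₖ U := by
    show (hadamard2 ⊗ₖ I) * CU * (hadamard2 ⊗ₖ I) = _
    show (hadamard2 ⊗ₖ I) * (_ + _) * (hadamard2 ⊗ₖ I) = _
    rw [mul_add, add_mul]
    simp only [← mul_kronecker_mul, hI, Matrix.mul_one, Matrix.one_mul]
    rw [hA, hB]
  have hAH : Aᴴ = A := by
    rw [hAdef]; ext i j; fin_cases i <;> fin_cases j <;> simp
  have hBH : Bᴴ = B := by
    rw [hBdef]; ext i j; fin_cases i <;> fin_cases j <;> simp
  have hVH : Vᴴ = A ⊗ₖ I + B ⊗ₖ Uᴴ := by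
    rw [hV, conjTranspose_add, kronecker_conjTranspose', kronecker_conjTranspose',
      hAH, hBH, conjTranspose_one]
  have hUU : U * Uᴴ = 1 := (Matrix.mem_unitaryGroup_iff.mp hU)
  set cU : ℂ := (1 : ℂ) / (2 ^ (n - 1)) with hcU
  have hρ : ρ = cU • ((!![1, 0; 0, 0] : Matrix (Fin 2) (Fin 2) ℂ) ⊗ₖ I) := by
    show (!![1, 0; 0, 0] : Matrix (Fin 2) (Fin 2) ℂ) ⊗ₖ (cU • I) = _
    rw [kronecker_smul]
  set P0 : Matrix (Fin 2) (Fin 2) ℂ := !![1, 0; 0, 0] with hP0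
  have key : V * ρ * Vᴴ =
      cU • ((A * P0 * A) ⊗ₖ I + (A * P0 * B) ⊗ₖ Uᴴ + (B * P0 * A) ⊗ₖ U
        + (B * P0 * B) ⊗ₖ I) := by
    rw [hρ, hVH, hV]
    rw [Matrix.mul_smul, Matrix.smul_mul]
    congr 1
    simp only [add_mul, mul_add, ← mul_kronecker_mul, hI, Matrix.mul_one, Matrix.one_mul, hUU]
    abel
  rw [key, Matrix.mul_smul, trace_smul]
  rw [mul_add, mul_add, mul_add]
  simp only [← mul_kronecker_mul, Matrix.one_mul]
  rw [trace_add, trace_add, trace_add, trace_kronecker, trace_kronecker,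
    trace_kronecker, trace_kronecker]
  simp only [hI, Matrix.one_mul, Matrix.mul_one]
  have e1 : (pauliZ * (A * P0 * A)).trace = 0 := by
    rw [pauliZ, hAdef, hP0]
    simp [Matrix.trace_fin_two, Matrix.mul_apply, Fin.sum_univ_two]
  have e2 : (pauliZ * (A * P0 * B)).trace = 1/2 := by
    rw [pauliZ, hAdef, hBdef, hP0]
    simp [Matrix.trace_fin_two, Matrix.mul_apply, Fin.sum_univ_two]
    ring
  have e3 : (pauliZ * (B * P0 * A)).trace = 1/2 := by
    rw [pauliZ, hAdef, hBdef, hP0]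
    simp [Matrix.trace_fin_two, Matrix.mul_apply, Fin.sum_univ_two]
    ring
  have e4 : (pauliZ * (B * P0 * B)).trace = 0 := by
    rw [pauliZ, hBdef, hP0]
    simp [Matrix.trace_fin_two, Matrix.mul_apply, Fin.sum_univ_two]
  have hUt : Uᴴ.trace = (starRingEnd ℂ) U.trace := Matrix.trace_conjTranspose U
  rw [e1, e2, e3, e4, hUt, hcU, smul_eq_mul]
  have h := Complex.add_conj U.trace
  push_cast at h
  linear_combination h / (2 * (2:ℂ) ^ (n - 1))
end
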